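/- arXiv:0709.3788 — 9 statements merged into one kernel-verified Lean document; each statement's English description precedes it below -/
import Mathlib

section
/- One has ∫_{−π}^{0} ( sin²v / v² − sin(2v)/v + 1 ) dv = π. (Equivalently, ∫_{−π}^{0} ( sin²v / v² − sin(2v)/v ) dv = 0.) This expresses, after the substitution x = 1 − v·cot v + log(v/sin v), that the function g_∞(x) = (1/π)·Im(1/W_{−1}(−e^{−1+x})) is a probability density on [0, ∞). -/
open Real MeasureTheory intervalIntegral Set

noncomputable def mySinc (v : ℝ) : ℝ := if v = 0 then 1 else Real.sin v / v

lemma mySinc_ne (v : ℝ) (hv : v ≠ 0) : mySinc v = Real.sin v / v := if_neg hv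

lemma continuous_mySinc : Continuous mySinc := by
  rw [continuous_iff_continuousAt]
  intro x
  by_cases hx : x = 0
  · subst hx
    rw [← continuousWithinAt_compl_self]
    have h1 : Filter.Tendsto (fun v : ℝ => Real.sin v / v) (nhdsWithin 0 {0}ᶜ) (nhds 1) := by
      have := Real.hasDerivAt_sin 0
      rw [hasDerivAt_iff_tendsto_slope] at this
      simp only [slope_def_field, Real.sin_zero, Real.cos_zero] at this
      refine this.congr' ?_
      filter_upwards [self_mem_nhdsWithin] with v hv
      simp [slope_def_field]
    have : Filter.Tendsto mySinc (nhdsWithin 0 {0}ᶜ) (nhds 1) := by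
      refine h1.congr' ?_
      filter_upwards [self_mem_nhdsWithin] with v hv
      exact (mySinc_ne v hv).symm
    simpa [ContinuousWithinAt, mySinc] using this
  · have : ContinuousAt (fun v => Real.sin v / v) x :=
      (Real.continuous_sin.continuousAt).div continuousAt_id hx
    refine this.congr ?_
    filter_upwards [isOpen_compl_singleton.mem_nhds hx] with v hv
    exact (mySinc_ne v hv).symm

/-- The integral identity `∫_{−π}^{0} ( sin²v/v² − sin(2v)/v + 1 ) dv = π`, which expresses
(after the substitution `x = 1 − v·cot v + log(v/sin v)`) that the density
`g_∞(x) = (1/π)·Im(1/W₋₁(−e^{−1+x}))` of the final jump time is a probability density on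
`[0, ∞)`. -/
theorem integral_density_substituted_eq_pi :
    ∫ v in (-Real.pi)..0,
      (Real.sin v ^ 2 / v ^ 2 - Real.sin (2 * v) / v + 1) = Real.pi := by
  set g : ℝ → ℝ := fun v => mySinc v ^ 2 - 2 * mySinc v * Real.cos v + 1 with hg
  have hgc : Continuous g := by
    have := continuous_mySinc
    continuity
  have hgeq : ∀ v : ℝ, v ≠ 0 →
      Real.sin v ^ 2 / v ^ 2 - Real.sin (2 * v) / v + 1 = g v := by
    intro v hv
    rw [hg]
    simp only [mySinc_ne v hv, Real.sin_two_mul]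
    field_simp
  have hcongr : ∫ v in (-Real.pi)..0,
      (Real.sin v ^ 2 / v ^ 2 - Real.sin (2 * v) / v + 1) = ∫ v in (-Real.pi)..0, g v := by
    apply intervalIntegral.integral_congr_ae
    have h0 : (volume : Measure ℝ) {(0:ℝ)} = 0 := measure_singleton 0
    filter_upwards [measure_eq_zero_iff_ae_notMem.mp h0] with v hv _
    exact hgeq v hv
  rw [hcongr]
  set F : ℝ → ℝ := fun v => v - Real.sin v * mySinc v with hF
  have hFa : F (-Real.pi) = -Real.pi := by simp [hF]
  have hFb : F 0 = 0 := by simp [hF]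
  have key : ∫ v in (-Real.pi)..0, g v = F 0 - F (-Real.pi) := by
    apply intervalIntegral.integral_eq_sub_of_hasDeriv_right_of_le
    · linarith [Real.pi_pos]
    · exact (continuous_id.sub (Real.continuous_sin.mul continuous_mySinc)).continuousOn
    · intro v hv
      have hv0 : v ≠ 0 := ne_of_lt hv.2
      have hd : HasDerivAt (fun w => w - Real.sin w ^ 2 / w) (g v) v := by
        have h1 : HasDerivAt (fun w : ℝ => Real.sin w ^ 2) (2 * Real.sin v * Real.cos v) v := by
          have := (Real.hasDerivAt_sin v).fun_pow 2
          simpa [mul_comm, mul_assoc, mul_left_comm] using this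
        have h2 : HasDerivAt (fun w => Real.sin w ^ 2 / w)
            ((2 * Real.sin v * Real.cos v * v - Real.sin v ^ 2 * 1) / v ^ 2) v :=
          h1.div (hasDerivAt_id v) hv0
        have h3 := (hasDerivAt_id' v).fun_sub h2
        refine h3.congr_deriv ?_; symm
        rw [hg]
        simp only [mySinc_ne v hv0]
        field_simp
        ring
      have heq : (fun w => w - Real.sin w ^ 2 / w) =ᶠ[nhds v] F := by
        filter_upwards [isOpen_compl_singleton.mem_nhds hv0] with w hw
        rw [hF]
        simp only [mySinc_ne w hw]
        field_simp
      exact ((hd.congr_of_eventuallyEq heq.symm)).hasDerivWithinAt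
    · exact hgc.intervalIntegrable _ _
  rw [key, hFa, hFb]
  ring
end

section
/- The function v ↦ (1 − v·(cos v / sin v) + log(v / sin v)) · ( sin²v / v² − sin(2v)/v + 1 ) is nonnegative on (−π, 0) and is not Lebesgue integrable there: its integral over (−π, 0) diverges to +∞. This expresses, after the substitution x = 1 − v·cot v + log(v/sin v), that the density g_∞ of the final jump time has infinite mean: ∫_0^∞ x·g_∞(x) dx = ∞. -/
open Real MeasureTheory Set

/-- Pointwise nonnegativity of both factors on `(-π, 0)`. -/
lemma factor1_nonneg {v : ℝ} (hv : v ∈ Set.Ioo (-Real.pi) 0) :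
    0 ≤ 1 - v * (Real.cos v / Real.sin v) + Real.log (v / Real.sin v) := by
  obtain ⟨h1, h2⟩ := hv
  have hs : Real.sin v < 0 := Real.sin_neg_of_neg_of_neg_pi_lt h2 h1
  have hvs : v < Real.sin v := by
    have := Real.sin_lt (x := -v) (by linarith)
    rw [Real.sin_neg] at this; linarith
  have hlog : 0 ≤ Real.log (v / Real.sin v) := by
    apply Real.log_nonneg
    rw [le_div_iff_of_neg hs]; linarith
  have hcot : v * (Real.cos v / Real.sin v) ≤ 1 := by
    rcases le_or_gt (Real.cos v) 0 with hc | hc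
    · have : 0 ≤ Real.cos v / Real.sin v := div_nonneg_of_nonpos hc hs.le
      nlinarith
    · -- cos v > 0 forces v ∈ (-π/2, 0), where tan v < v
      have hv2 : -(Real.pi / 2) < v := by
        by_contra hcon
        push_neg at hcon
        have : Real.cos v ≤ 0 := by
          have : Real.cos (-v) ≤ 0 :=
            Real.cos_nonpos_of_pi_div_two_le_of_le (by linarith)
              (by linarith [Real.pi_pos])
          rwa [Real.cos_neg] at this
        linarith
      have htan : -v < Real.tan (-v) := Real.lt_tan (by linarith) (by linarith)
      rw [Real.tan_neg] at htan
      have htv : Real.tan v < v := by linarith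
      rw [Real.tan_eq_sin_div_cos] at htv
      have hsv : Real.sin v ≤ v * Real.cos v := by
        have := (div_lt_iff₀ hc).1 htv
        linarith
      have hinv : (Real.sin v)⁻¹ ≤ 0 := by
        exact inv_nonpos.2 hs.le
      have := mul_le_mul_of_nonpos_right hsv hinv
      rw [mul_inv_cancel₀ hs.ne] at this
      calc v * (Real.cos v / Real.sin v) = v * Real.cos v * (Real.sin v)⁻¹ := by ring
        _ ≤ 1 := this
  linarith

lemma factor2_nonneg {v : ℝ} (hv : v ∈ Set.Ioo (-Real.pi) 0) :
    0 ≤ Real.sin v ^ 2 / v ^ 2 - Real.sin (2 * v) / v + 1 := by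
  have key : Real.sin v ^ 2 / v ^ 2 - Real.sin (2 * v) / v + 1
      = (Real.sin v / v) ^ 2 - 2 * Real.cos v * (Real.sin v / v) + 1 := by
    rw [Real.sin_two_mul]; ring
  rw [key]
  nlinarith [sq_nonneg (Real.sin v / v - Real.cos v), Real.cos_sq_le_one v]

/-- The base divergent integral. -/
lemma base_top : ∫⁻ v in Set.Ioo (-Real.pi) (-3), ENNReal.ofReal ((v + Real.pi)⁻¹) = ⊤ := by
  by_contra h
  have hπ3 : (3 : ℝ) < Real.pi := Real.pi_gt_three
  have hmeas : Measurable fun v : ℝ => (v + Real.pi)⁻¹ :=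
    (measurable_id.add_const _).inv
  have hnn : 0 ≤ᵐ[volume.restrict (Set.Ioo (-Real.pi) (-3))]
      fun v : ℝ => (v + Real.pi)⁻¹ := by
    refine (ae_restrict_iff' measurableSet_Ioo).2 (Filter.Eventually.of_forall fun v hv => ?_)
    exact inv_nonneg.2 (by linarith [hv.1])
  have hint : IntegrableOn (fun v : ℝ => (v + Real.pi)⁻¹)
      (Set.Ioo (-Real.pi) (-3)) := by
    refine ⟨hmeas.aestronglyMeasurable, ?_⟩
    rw [hasFiniteIntegral_iff_ofReal hnn]
    exact lt_top_iff_ne_top.2 h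
  have hii : IntervalIntegrable (fun v : ℝ => (v - (-Real.pi))⁻¹) volume
      (-Real.pi) (-3) := by
    rw [intervalIntegrable_iff_integrableOn_Ioo_of_le (by linarith)]
    simpa [sub_neg_eq_add] using hint
  rw [intervalIntegrable_sub_inv_iff] at hii
  rcases hii with h' | h'
  · linarith [neg_eq_iff_eq_neg.1 h']
  · exact h' Set.left_mem_uIcc

/-- Pointwise lower bound near `-π`. -/
lemma lower_bound {v : ℝ} (hv : v ∈ Set.Ioo (-Real.pi) (-3)) :
    (v + Real.pi)⁻¹ ≤ (1 - v * (Real.cos v / Real.sin v) + Real.log (v / Real.sin v)) *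
      (Real.sin v ^ 2 / v ^ 2 - Real.sin (2 * v) / v + 1) := by
  obtain ⟨h1, h2⟩ := hv
  have hπ3 : (3 : ℝ) < Real.pi := Real.pi_gt_three
  have hv0 : v < 0 := by linarith
  have hs : Real.sin v < 0 := Real.sin_neg_of_neg_of_neg_pi_lt hv0 h1
  have hvp : 0 < v + Real.pi := by linarith
  -- `-sin v ≤ v + π`
  have hsle : -Real.sin v ≤ v + Real.pi := by
    have h := Real.sin_le (x := v + Real.pi) hvp.le
    rw [Real.sin_add, Real.sin_pi, Real.cos_pi] at h
    simpa using h
  -- `cos v ≤ -1/2`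
  have hcos : Real.cos v ≤ -1/2 := by
    have h23 : 2 * Real.pi / 3 ≤ -v := by
      nlinarith [Real.pi_lt_d2]
    have := Real.cos_le_cos_of_nonneg_of_le_pi (x := 2 * Real.pi / 3) (y := -v)
      (by positivity) (by linarith) h23
    have hc23 : Real.cos (2 * Real.pi / 3) = -(1/2) := by
      have : (2 : ℝ) * Real.pi / 3 = Real.pi - Real.pi / 3 := by ring
      rw [this, Real.cos_pi_sub, Real.cos_pi_div_three]
    rw [Real.cos_neg] at this
    rw [hc23] at this
    linarith
  -- factor 2 ≥ 1
  have hfac2 : 1 ≤ Real.sin v ^ 2 / v ^ 2 - Real.sin (2 * v) / v + 1 := by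
    have key : Real.sin v ^ 2 / v ^ 2 - Real.sin (2 * v) / v + 1
        = (Real.sin v / v) ^ 2 - 2 * Real.cos v * (Real.sin v / v) + 1 := by
      rw [Real.sin_two_mul]; ring
    rw [key]
    have hw : 0 ≤ Real.sin v / v := div_nonneg_of_nonpos hs.le hv0.le
    nlinarith [sq_nonneg (Real.sin v / v)]
  -- factor 1 ≥ (v+π)⁻¹
  have hlog : 0 ≤ Real.log (v / Real.sin v) := by
    apply Real.log_nonneg
    rw [le_div_iff_of_neg hs]
    nlinarith [Real.neg_one_le_sin v]
  have hcot : (v + Real.pi)⁻¹ ≤ -(v * (Real.cos v / Real.sin v)) := by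
    have hvc : (3 : ℝ) / 2 ≤ v * Real.cos v := by nlinarith
    have hns : 0 < -Real.sin v := by linarith
    have step1 : (v + Real.pi)⁻¹ ≤ (-Real.sin v)⁻¹ :=
      one_div (v + Real.pi) ▸ one_div (-Real.sin v) ▸
        one_div_le_one_div_of_le hns hsle
    have step2 : (-Real.sin v)⁻¹ ≤ (3/2) * (-Real.sin v)⁻¹ := by
      nlinarith [inv_pos.2 hns]
    have step3 : (3/2 : ℝ) * (-Real.sin v)⁻¹ ≤ v * Real.cos v * (-Real.sin v)⁻¹ := by
      have := inv_pos.2 hns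
      nlinarith
    have heq : v * Real.cos v * (-Real.sin v)⁻¹ = -(v * (Real.cos v / Real.sin v)) := by
      rw [inv_neg, div_eq_mul_inv]; ring
    have htot : (v + Real.pi)⁻¹ ≤ v * Real.cos v * (-Real.sin v)⁻¹ :=
      step1.trans (step2.trans step3)
    rw [heq] at htot
    exact htot
  have hfac1 : (v + Real.pi)⁻¹ ≤
      1 - v * (Real.cos v / Real.sin v) + Real.log (v / Real.sin v) := by
    linarith
  calc (v + Real.pi)⁻¹ = (v + Real.pi)⁻¹ * 1 := (mul_one _).symm
    _ ≤ (1 - v * (Real.cos v / Real.sin v) + Real.log (v / Real.sin v)) *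
        (Real.sin v ^ 2 / v ^ 2 - Real.sin (2 * v) / v + 1) :=
      mul_le_mul hfac1 hfac2 zero_le_one
        (le_trans (inv_pos.2 hvp).le hfac1)

/-- The function `v ↦ (1 − v·cot v + log(v/sin v))·(sin²v/v² − sin(2v)/v + 1)` is nonnegative
on `(−π, 0)` and its (Lebesgue) integral over `(−π, 0)` diverges to `+∞`; equivalently, after
the substitution `x = 1 − v·cot v + log(v/sin v)`, the density `g_∞` of the final jump time
has infinite mean: `∫_0^∞ x·g_∞(x) dx = ∞`. -/
theorem not_integrable_mean_substituted :
    (∀ v ∈ Set.Ioo (-Real.pi) 0,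
      0 ≤ (1 - v * (Real.cos v / Real.sin v) + Real.log (v / Real.sin v)) *
            (Real.sin v ^ 2 / v ^ 2 - Real.sin (2 * v) / v + 1)) ∧
    ∫⁻ v in Set.Ioo (-Real.pi) 0,
      ENNReal.ofReal ((1 - v * (Real.cos v / Real.sin v) + Real.log (v / Real.sin v)) *
            (Real.sin v ^ 2 / v ^ 2 - Real.sin (2 * v) / v + 1)) = ⊤ := by
  constructor
  · exact fun v hv => mul_nonneg (factor1_nonneg hv) (factor2_nonneg hv)
  · rw [eq_top_iff]
    calc (⊤ : ENNReal) = ∫⁻ v in Set.Ioo (-Real.pi) (-3),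
        ENNReal.ofReal ((v + Real.pi)⁻¹) := base_top.symm
      _ ≤ ∫⁻ v in Set.Ioo (-Real.pi) (-3),
          ENNReal.ofReal ((1 - v * (Real.cos v / Real.sin v) + Real.log (v / Real.sin v)) *
            (Real.sin v ^ 2 / v ^ 2 - Real.sin (2 * v) / v + 1)) :=
        setLIntegral_mono' measurableSet_Ioo fun v hv =>
          ENNReal.ofReal_le_ofReal (lower_bound hv)
      _ ≤ _ := lintegral_mono_set (Set.Ioo_subset_Ioo le_rfl (by linarith [Real.pi_gt_three]))
end

section
/- For every v ∈ (−π, 0), (v² − sin²v)·sin v + 2·v²·(sin v − v·cos v) < 0. (Equivalently, (3 − 2v·cot v)·v²/sin²v − 1 > 0 for all v ∈ (−π, 0); this is the inequality showing that the density f_J is strictly decreasing on (0, ∞).) -/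
/-- For every `v ∈ (−π, 0)`, `(v² − sin²v)·sin v + 2·v²·(sin v − v·cos v) < 0`;
equivalently `(3 − 2v·cot v)·v²/sin²v − 1 > 0` on `(−π, 0)`.  This is the trigonometric
inequality showing that the density `f_J` is strictly decreasing on `(0, ∞)`. -/
theorem trig_ineq_fJ_decreasing :
    ∀ v ∈ Set.Ioo (-Real.pi) 0,
      (v ^ 2 - Real.sin v ^ 2) * Real.sin v +
        2 * v ^ 2 * (Real.sin v - v * Real.cos v) < 0 := by
  rintro v ⟨h1, h2⟩
  have hu0 : 0 < -v := by linarith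
  have huπ : -v < Real.pi := by linarith
  have hsin : 0 < Real.sin (-v) := Real.sin_pos_of_pos_of_lt_pi hu0 huπ
  have hsinlt : Real.sin (-v) < -v := Real.sin_lt hu0
  have h3 : 0 < Real.sin (-v) - (-v) * Real.cos (-v) := by
    rcases le_or_gt (Real.cos (-v)) 0 with hc | hc
    · nlinarith
    · have hu2 : -v < Real.pi / 2 := by
        by_contra h
        push_neg at h
        have := Real.cos_nonpos_of_pi_div_two_le_of_le h (by linarith [Real.pi_pos])
        linarith
      have ht := Real.lt_tan hu0 hu2
      rw [Real.tan_eq_sin_div_cos] at ht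
      have := (lt_div_iff₀ hc).mp ht
      linarith
  simp only [Real.sin_neg, Real.cos_neg] at hsin hsinlt h3
  nlinarith [mul_pos (mul_pos hu0 hu0) h3, mul_pos (mul_pos hu0 hsin) (by linarith : (0:ℝ) < -v - -Real.sin v), sq_nonneg v]
end

section
/- As v → 0 from the left, (−v / ((1 − v·(cos v/sin v))² + v²)) · √(2·(1 − v·(cos v/sin v) + log(v / sin v))) → 1. (This expresses the asymptotic π·f_J(t) ∼ 1/√(2t) as t → 0+, under the parametrization t = x(v) = 1 − v·cot v + log(v/sin v), for which π·f_J(x(v)) = −v/((1 − v·cot v)² + v²).) -/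
open Filter Real Set

lemma ev_mem : ∀ᶠ v in nhdsWithin (0:ℝ) (Set.Iio 0), v ∈ Set.Ioo (-1:ℝ) 0 := by
  have h1 : Set.Iio (0:ℝ) ∈ nhdsWithin (0:ℝ) (Set.Iio 0) := self_mem_nhdsWithin
  have h2 : Set.Ioi (-1:ℝ) ∈ nhdsWithin (0:ℝ) (Set.Iio 0) :=
    nhdsWithin_le_nhds (Ioi_mem_nhds (by norm_num))
  filter_upwards [h1, h2] with v hv1 hv2
  exact ⟨hv2, hv1⟩

lemma tendsto_abs_zero : Tendsto (fun v : ℝ => |v|) (nhdsWithin (0:ℝ) (Set.Iio 0)) (nhds 0) := by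
  have : Tendsto (fun v : ℝ => |v|) (nhds (0:ℝ)) (nhds |0|) :=
    (continuous_abs).tendsto 0
  simpa using this.mono_left nhdsWithin_le_nhds

lemma limA : Tendsto (fun v : ℝ => (v - Real.sin v)/v^3) (nhdsWithin (0:ℝ) (Set.Iio 0))
    (nhds (1/6)) := by
  rw [← tendsto_sub_nhds_zero_iff]
  apply squeeze_zero_norm' (a := fun v => |v| * (5/96))
  · filter_upwards [ev_mem] with v hv
    have hv0 : v ≠ 0 := ne_of_lt hv.2
    have habs : |v| ≤ 1 := by rw [abs_le]; constructor <;> [linarith [hv.1]; linarith [hv.2]]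
    have hb : |Real.sin v - (v - v^3/6)| ≤ |v|^4 * (5/96) := (Real.sin_bound habs).trans (by have h4 : 0 ≤ |v|^4 := pow_nonneg (abs_nonneg v) 4; nlinarith [mul_le_mul_of_nonneg_left habs h4])
    have h1 : (v - Real.sin v)/v^3 - 1/6 = -((Real.sin v - (v - v^3/6))/v^3) := by
      field_simp; ring
    rw [Real.norm_eq_abs, h1, abs_neg, abs_div, abs_pow]
    rw [div_le_iff₀ (by positivity)]
    calc |Real.sin v - (v - v^3/6)| ≤ |v|^4 * (5/96) := hb
      _ = |v| * (5/96) * |v|^3 := by ring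
  · simpa using tendsto_abs_zero.mul_const (5/96 : ℝ)

lemma limB : Tendsto (fun v : ℝ => (Real.sin v - v * Real.cos v)/v^3)
    (nhdsWithin (0:ℝ) (Set.Iio 0)) (nhds (1/3)) := by
  rw [← tendsto_sub_nhds_zero_iff]
  apply squeeze_zero_norm' (a := fun v => |v| * (10/96))
  · filter_upwards [ev_mem] with v hv
    have hv0 : v ≠ 0 := ne_of_lt hv.2
    have habs : |v| ≤ 1 := by rw [abs_le]; constructor <;> [linarith [hv.1]; linarith [hv.2]]
    have hbs : |Real.sin v - (v - v^3/6)| ≤ |v|^4 * (5/96) := (Real.sin_bound habs).trans (by have h4 : 0 ≤ |v|^4 := pow_nonneg (abs_nonneg v) 4; nlinarith [mul_le_mul_of_nonneg_left habs h4])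
    have hbc := Real.cos_bound habs
    have h1 : (Real.sin v - v * Real.cos v)/v^3 - 1/3 =
        ((Real.sin v - (v - v^3/6)) - v * (Real.cos v - (1 - v^2/2)))/v^3 := by
      field_simp; ring
    rw [Real.norm_eq_abs, h1, abs_div, abs_pow]
    rw [div_le_iff₀ (by positivity)]
    have h2 : |(Real.sin v - (v - v^3/6)) - v * (Real.cos v - (1 - v^2/2))| ≤
        |v|^4 * (5/96) + |v| * (|v|^4 * (5/96)) := by
      calc |(Real.sin v - (v - v^3/6)) - v * (Real.cos v - (1 - v^2/2))|
          ≤ |Real.sin v - (v - v^3/6)| + |v * (Real.cos v - (1 - v^2/2))| := abs_sub _ _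
        _ ≤ |v|^4 * (5/96) + |v| * (|v|^4 * (5/96)) := by
            rw [abs_mul]
            exact add_le_add hbs (by gcongr)
    calc |(Real.sin v - (v - v^3/6)) - v * (Real.cos v - (1 - v^2/2))|
        ≤ |v|^4 * (5/96) + |v| * (|v|^4 * (5/96)) := h2
      _ ≤ |v|^4 * (5/96) + 1 * (|v|^4 * (5/96)) := by
          gcongr
      _ = |v|^4 * (10/96) := by ring
      _ = |v| * (10/96) * |v|^3 := by ring
  · simpa using tendsto_abs_zero.mul_const (10/96 : ℝ)

lemma limC : Tendsto (fun v : ℝ => v / Real.sin v) (nhdsWithin (0:ℝ) (Set.Iio 0)) (nhds 1) := by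
  have hC0 : Tendsto (fun v : ℝ => Real.sin v / v) (nhdsWithin (0:ℝ) (Set.Iio 0)) (nhds 1) := by
    rw [← tendsto_sub_nhds_zero_iff]
    apply squeeze_zero_norm' (a := fun v => |v| * (1/6 + 5/96))
    · filter_upwards [ev_mem] with v hv
      have hv0 : v ≠ 0 := ne_of_lt hv.2
      have habs : |v| ≤ 1 := by rw [abs_le]; constructor <;> [linarith [hv.1]; linarith [hv.2]]
      have hb : |Real.sin v - (v - v^3/6)| ≤ |v|^4 * (5/96) := (Real.sin_bound habs).trans (by have h4 : 0 ≤ |v|^4 := pow_nonneg (abs_nonneg v) 4; nlinarith [mul_le_mul_of_nonneg_left habs h4])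
      have h1 : Real.sin v / v - 1 = ((Real.sin v - (v - v^3/6)) + (- v^3/6))/v := by
        field_simp; ring
      rw [Real.norm_eq_abs, h1, abs_div]
      rw [div_le_iff₀ (abs_pos.2 hv0)]
      have hv2 : |v|^2 ≤ 1 := by nlinarith [abs_nonneg v]
      calc |(Real.sin v - (v - v^3/6)) + (- v^3/6)|
          ≤ |Real.sin v - (v - v^3/6)| + |(-v^3/6)| := abs_add_le _ _
        _ ≤ |v|^4 * (5/96) + |v|^3 * (1/6) := by
            refine add_le_add hb ?_
            rw [abs_div, abs_neg, abs_pow]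
            norm_num [le_of_eq, div_eq_mul_inv]
        _ ≤ |v|^2 * (5/96) + |v|^2 * (1/6) := by
            have h4 : |v|^4 ≤ |v|^2 := by nlinarith [abs_nonneg v]
            have h3 : |v|^3 ≤ |v|^2 := by nlinarith [abs_nonneg v]
            gcongr
        _ = |v| * (1/6 + 5/96) * |v| := by ring
    · simpa using tendsto_abs_zero.mul_const (1/6 + 5/96 : ℝ)
  have h := hC0.inv₀ (by norm_num)
  rw [show (1:ℝ)⁻¹ = 1 by norm_num] at h
  refine h.congr' ?_
  filter_upwards [ev_mem] with v hv
  have hv0 : v ≠ 0 := ne_of_lt hv.2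
  rw [inv_div]

/-- As `v → 0⁻`,
`(−v/((1 − v·cot v)² + v²)) · √(2·(1 − v·cot v + log(v/sin v))) → 1`.
This expresses the asymptotic `π·f_J(t) ∼ 1/√(2t)` as `t → 0+` under the parametrization
`t = x(v) = 1 − v·cot v + log(v/sin v)`, for which `π·f_J(x(v)) = −v/((1 − v·cot v)² + v²)`. -/
theorem tendsto_fJ_asymptotic :
    Tendsto
      (fun v : ℝ =>
        (-v / ((1 - v * (Real.cos v / Real.sin v)) ^ 2 + v ^ 2)) *
          Real.sqrt (2 * (1 - v * (Real.cos v / Real.sin v) + Real.log (v / Real.sin v))))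
      (nhdsWithin 0 (Set.Iio 0)) (nhds 1) := by
  have hpi := Real.pi_gt_three
  have hsin : ∀ v : ℝ, v ∈ Set.Ioo (-1:ℝ) 0 → Real.sin v < 0 := fun v hv =>
    Real.sin_neg_of_neg_of_neg_pi_lt hv.2 (by linarith [hv.1])
  have hidv : Tendsto (fun v : ℝ => v) (nhdsWithin (0:ℝ) (Set.Iio 0)) (nhds 0) :=
    tendsto_id.mono_right nhdsWithin_le_nhds
  -- h → 0
  have hh : Tendsto (fun v : ℝ => (1 - v * (Real.cos v / Real.sin v))/v)
      (nhdsWithin (0:ℝ) (Set.Iio 0)) (nhds 0) := by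
    have h := limB.mul (hidv.mul limC)
    rw [show (1/3 : ℝ) * (0 * 1) = 0 by norm_num] at h
    refine h.congr' ?_
    filter_upwards [ev_mem] with v hv
    have hv0 : v ≠ 0 := ne_of_lt hv.2
    have hs : Real.sin v ≠ 0 := ne_of_lt (hsin v hv)
    field_simp
  -- (1 - v cot v)/v² → 1/3
  have h13 : Tendsto (fun v : ℝ => (1 - v * (Real.cos v / Real.sin v))/v^2)
      (nhdsWithin (0:ℝ) (Set.Iio 0)) (nhds (1/3)) := by
    have h := limB.mul limC
    rw [show (1/3 : ℝ) * 1 = 1/3 by norm_num] at h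
    refine h.congr' ?_
    filter_upwards [ev_mem] with v hv
    have hv0 : v ≠ 0 := ne_of_lt hv.2
    have hs : Real.sin v ≠ 0 := ne_of_lt (hsin v hv)
    field_simp
  -- log(v/sin v)/v² → 1/6
  have hlog : Tendsto (fun v : ℝ => Real.log (v / Real.sin v)/v^2)
      (nhdsWithin (0:ℝ) (Set.Iio 0)) (nhds (1/6)) := by
    have hupper := limA.mul limC
    rw [show (1/6 : ℝ) * 1 = 1/6 by norm_num] at hupper
    refine tendsto_of_tendsto_of_tendsto_of_le_of_le' limA hupper ?_ ?_
    · filter_upwards [ev_mem] with v hv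
      have hv0 : v ≠ 0 := ne_of_lt hv.2
      have hs : Real.sin v < 0 := hsin v hv
      have hx : 0 < v / Real.sin v := div_pos_of_neg_of_neg hv.2 hs
      have hlb := Real.one_sub_inv_le_log_of_pos hx
      have e1 : (v - Real.sin v)/v^3 = ((v - Real.sin v)/v)/v^2 := by
        rw [div_div]; ring_nf
      have e2 : 1 - (v / Real.sin v)⁻¹ = (v - Real.sin v)/v := by
        rw [inv_div]; field_simp
      rw [e1]
      gcongr
      rw [← e2]; exact hlb
    · filter_upwards [ev_mem] with v hv
      have hv0 : v ≠ 0 := ne_of_lt hv.2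
      have hs : Real.sin v < 0 := hsin v hv
      have hs0 : Real.sin v ≠ 0 := ne_of_lt hs
      have hx : 0 < v / Real.sin v := div_pos_of_neg_of_neg hv.2 hs
      have hub := Real.log_le_sub_one_of_pos hx
      have e1 : (v - Real.sin v)/v^3 * (v / Real.sin v)
          = ((v - Real.sin v)/Real.sin v)/v^2 := by
        field_simp
      have e2 : v / Real.sin v - 1 = (v - Real.sin v)/Real.sin v := by
        field_simp
      rw [e1]
      gcongr
      rw [← e2]; exact hub
  -- g → 1/2
  have hg : Tendsto (fun v : ℝ =>
      (1 - v * (Real.cos v / Real.sin v) + Real.log (v / Real.sin v))/v^2)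
      (nhdsWithin (0:ℝ) (Set.Iio 0)) (nhds (1/2)) := by
    have h := h13.add hlog
    rw [show (1/3 : ℝ) + 1/6 = 1/2 by norm_num] at h
    refine h.congr ?_
    intro v
    rw [← add_div]
  -- sqrt part → 1
  have hsq : Tendsto (fun v : ℝ =>
      Real.sqrt (2 * ((1 - v * (Real.cos v / Real.sin v) + Real.log (v / Real.sin v))/v^2)))
      (nhdsWithin (0:ℝ) (Set.Iio 0)) (nhds 1) := by
    have h := (hg.const_mul 2).sqrt
    rw [show (2:ℝ) * (1/2) = 1 by norm_num, Real.sqrt_one] at h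
    exact h
  -- denominator → 1
  have hden : Tendsto (fun v : ℝ =>
      ((1 - v * (Real.cos v / Real.sin v))/v)^2 + 1)
      (nhdsWithin (0:ℝ) (Set.Iio 0)) (nhds 1) := by
    have h := (hh.pow 2).add_const 1
    rw [show (0:ℝ)^2 + 1 = 1 by norm_num] at h
    exact h
  have hfinal := hsq.div hden one_ne_zero
  rw [show (1:ℝ)/1 = 1 by norm_num] at hfinal
  refine hfinal.congr' ?_
  filter_upwards [ev_mem] with v hv
  have hv0 : v ≠ 0 := ne_of_lt hv.2
  have hs : Real.sin v < 0 := hsin v hv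
  have hv2 : (0:ℝ) < v^2 := by positivity
  set c := 1 - v * (Real.cos v / Real.sin v) with hc
  set X := 1 - v * (Real.cos v / Real.sin v) + Real.log (v / Real.sin v) with hX
  have hD : (0:ℝ) < c^2 + v^2 := by positivity
  have hE : (0:ℝ) < (c/v)^2 + 1 := by positivity
  have e1 : 2 * (X/v^2) = (2*X) * (v^2)⁻¹ := by ring
  simp only [Pi.div_apply]
  rw [← hc, ← hX, e1, Real.sqrt_mul' _ (by positivity), Real.sqrt_inv, Real.sqrt_sq_eq_abs,
    abs_of_neg hv.2]
  field_simp
end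

section
/- The function x(v) := 1 − v·(cos v / sin v) + log(v / sin v) is strictly decreasing on the interval (−π, 0); moreover x(v) → 0 as v → 0⁻ and x(v) → +∞ as v → −π⁺. Consequently x is a (continuous, strictly decreasing) bijection from (−π, 0) onto (0, ∞). -/
open Filter Real Set

lemma sinNeg' {v : ℝ} (h1 : -π < v) (h2 : v < 0) : Real.sin v < 0 := by
  have h := Real.sin_pos_of_pos_of_lt_pi (x := -v) (by linarith) (by linarith)
  rw [Real.sin_neg] at h; linarith

lemma hasDerivAtF {v : ℝ} (h1 : -π < v) (h2 : v < 0) :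
    HasDerivAt (fun v : ℝ => 1 - v * (Real.cos v / Real.sin v) + Real.log (v / Real.sin v))
      (((v - Real.sin v * Real.cos v)^2 + Real.sin v ^ 4) / (v * Real.sin v ^ 2)) v := by
  have hs : Real.sin v ≠ 0 := (sinNeg' h1 h2).ne
  have hv : v ≠ 0 := h2.ne
  have d1 : HasDerivAt (fun v => Real.cos v / Real.sin v)
      ((-Real.sin v * Real.sin v - Real.cos v * Real.cos v) / Real.sin v ^ 2) v :=
    (Real.hasDerivAt_cos v).div (Real.hasDerivAt_sin v) hs
  have d2 := (hasDerivAt_id v).mul d1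
  have d3 : HasDerivAt (fun v : ℝ => v / Real.sin v)
      ((1 * Real.sin v - v * Real.cos v) / Real.sin v ^ 2) v :=
    (hasDerivAt_id v).div (Real.hasDerivAt_sin v) hs
  have d4 := d3.log (div_ne_zero hv hs)
  have d5 := ((hasDerivAt_const v (1:ℝ)).sub d2).add d4
  convert d5 using 1
  all_goals try rfl
  have hp := Real.sin_sq_add_cos_sq v
  field_simp
  simp only [id_eq]
  linear_combination (Real.sin v^2 - v^2) * hp

lemma antiF : StrictAntiOn
    (fun v : ℝ => 1 - v * (Real.cos v / Real.sin v) + Real.log (v / Real.sin v))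
    (Set.Ioo (-π) 0) := by
  apply strictAntiOn_of_deriv_neg (convex_Ioo _ _)
  · exact fun v hv => (hasDerivAtF hv.1 hv.2).continuousAt.continuousWithinAt
  · intro v hv
    rw [interior_Ioo] at hv
    rw [(hasDerivAtF hv.1 hv.2).deriv]
    have hsl := sinNeg' hv.1 hv.2
    have hs2 : 0 < Real.sin v ^ 2 := by nlinarith
    apply div_neg_of_pos_of_neg
    · nlinarith [sq_nonneg (v - Real.sin v * Real.cos v), mul_pos hs2 hs2]
    · exact mul_neg_of_neg_of_pos hv.2 hs2

lemma lim0F : Tendsto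
    (fun v : ℝ => 1 - v * (Real.cos v / Real.sin v) + Real.log (v / Real.sin v))
    (nhdsWithin 0 (Set.Iio 0)) (nhds 0) := by
  have hs : Tendsto (fun v : ℝ => Real.sin v / v) (nhdsWithin 0 {0}ᶜ) (nhds 1) := by
    have h := hasDerivAt_iff_tendsto_slope.mp (Real.hasDerivAt_sin 0)
    simpa [slope_fun_def_field, Real.cos_zero, Real.sin_zero] using h
  have hdiv : Tendsto (fun v : ℝ => v / Real.sin v) (nhdsWithin 0 {0}ᶜ) (nhds 1) := by
    have h := hs.inv₀ one_ne_zero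
    simpa [inv_div] using h
  have hmono : nhdsWithin (0:ℝ) (Set.Iio 0) ≤ nhdsWithin 0 {0}ᶜ :=
    nhdsWithin_mono _ (fun x hx => ne_of_lt hx)
  have hdiv' := hdiv.mono_left hmono
  have hcos : Tendsto (fun v : ℝ => Real.cos v) (nhdsWithin (0:ℝ) (Set.Iio 0)) (nhds 1) := by
    have h : Tendsto Real.cos (nhdsWithin (0:ℝ) (Set.Iio 0)) (nhds (Real.cos 0)) :=
      (Real.continuous_cos.tendsto 0).mono_left nhdsWithin_le_nhds
    simpa using h
  have hlog : Tendsto (fun v : ℝ => Real.log (v / Real.sin v))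
      (nhdsWithin (0:ℝ) (Set.Iio 0)) (nhds 0) := by
    have h := (Real.continuousAt_log one_ne_zero).tendsto.comp hdiv'
    simpa [Function.comp_def] using h
  have hmul : Tendsto (fun v : ℝ => v * (Real.cos v / Real.sin v))
      (nhdsWithin (0:ℝ) (Set.Iio 0)) (nhds 1) := by
    have h := hdiv'.mul hcos
    rw [one_mul] at h
    refine h.congr (fun v => by ring)
  have h := ((tendsto_const_nhds (x := (1:ℝ))).sub hmul).add hlog
  simpa using h

lemma limPiF : Tendsto
    (fun v : ℝ => 1 - v * (Real.cos v / Real.sin v) + Real.log (v / Real.sin v))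
    (nhdsWithin (-π) (Set.Ioi (-π))) atTop := by
  set l := nhdsWithin (-π : ℝ) (Set.Ioi (-π)) with hl
  have hmem : ∀ᶠ v in l, v ∈ Set.Ioo (-π) 0 :=
    eventually_of_mem (Ioo_mem_nhdsGT_of_mem (show (-π:ℝ) ∈ Set.Ico (-π) 0 from ⟨le_rfl, by linarith [Real.pi_pos]⟩)) (fun x hx => hx)
  have hsin0 : Tendsto (fun v : ℝ => -Real.sin v) l (nhdsWithin 0 (Set.Ioi 0)) := by
    rw [tendsto_nhdsWithin_iff]
    constructor
    · have h : Tendsto (fun v : ℝ => -Real.sin v) l (nhds (-Real.sin (-π))) :=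
        (Real.continuous_sin.neg.tendsto (-π)).mono_left nhdsWithin_le_nhds
      simpa [Real.sin_neg, Real.sin_pi] using h
    · filter_upwards [hmem] with v hv
      exact neg_pos.2 (sinNeg' hv.1 hv.2)
  have hinv : Tendsto (fun v : ℝ => (-Real.sin v)⁻¹) l atTop := tendsto_inv_nhdsGT_zero.comp hsin0
  have hvs : Tendsto (fun v : ℝ => v / Real.sin v) l atTop := by
    have hc : Tendsto (fun v : ℝ => -v) l (nhds π) := by
      have h : Tendsto (fun v : ℝ => -v) l (nhds (-(-π))) :=
        (continuous_neg.tendsto (-π : ℝ)).mono_left nhdsWithin_le_nhds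
      simpa using h
    have h := hc.pos_mul_atTop Real.pi_pos hinv
    refine h.congr (fun v => ?_)
    rw [inv_neg, div_eq_mul_inv]; ring
  have hlog : Tendsto (fun v : ℝ => Real.log (v / Real.sin v)) l atTop :=
    Real.tendsto_log_atTop.comp hvs
  have hterm : Tendsto (fun v : ℝ => 1 - v * (Real.cos v / Real.sin v)) l atTop := by
    have hc : Tendsto (fun v : ℝ => v * Real.cos v) l (nhds π) := by
      have h : Tendsto (fun v : ℝ => v * Real.cos v) l (nhds ((-π) * Real.cos (-π))) :=
        ((continuous_id.mul Real.continuous_cos).tendsto (-π : ℝ)).mono_left nhdsWithin_le_nhds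
      simpa [Real.cos_neg, Real.cos_pi] using h
    have h := hc.pos_mul_atTop Real.pi_pos hinv
    have h2 := tendsto_atTop_add_const_left l 1 h
    refine h2.congr (fun v => ?_)
    rw [inv_neg, div_eq_mul_inv]; ring
  exact Tendsto.atTop_add_atTop hterm hlog

/-- The function `x(v) = 1 − v·cot v + log(v/sin v)` is strictly decreasing on `(−π, 0)`,
tends to `0` as `v → 0⁻` and to `+∞` as `v → −π⁺`; consequently it is a bijection from
`(−π, 0)` onto `(0, ∞)`.  This parametrizes the branch `W₋₁` of the Lambert function:
for each `t > 0` there is a unique `v ∈ (−π, 0)` with `W₋₁(−e^{−1+t}) = −v·cot v + iv`. -/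
theorem substitution_x_strictAnti_bijective :
    StrictAntiOn
      (fun v : ℝ => 1 - v * (Real.cos v / Real.sin v) + Real.log (v / Real.sin v))
      (Set.Ioo (-Real.pi) 0) ∧
    Tendsto (fun v : ℝ => 1 - v * (Real.cos v / Real.sin v) + Real.log (v / Real.sin v))
      (nhdsWithin 0 (Set.Iio 0)) (nhds 0) ∧
    Tendsto (fun v : ℝ => 1 - v * (Real.cos v / Real.sin v) + Real.log (v / Real.sin v))
      (nhdsWithin (-Real.pi) (Set.Ioi (-Real.pi))) atTop ∧
    Set.BijOn (fun v : ℝ => 1 - v * (Real.cos v / Real.sin v) + Real.log (v / Real.sin v))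
      (Set.Ioo (-Real.pi) 0) (Set.Ioi 0) := by
  set F := fun v : ℝ => 1 - v * (Real.cos v / Real.sin v) + Real.log (v / Real.sin v) with hF
  have hpos : ∀ v ∈ Set.Ioo (-π) 0, 0 < F v := by
    intro v hv
    have hwmem : v/2 ∈ Set.Ioo (-π) 0 := ⟨by linarith [hv.1, hv.2], by linarith [hv.2]⟩
    have hlt : F (v/2) < F v := antiF hv hwmem (by linarith [hv.2])
    have hge : (0:ℝ) ≤ F (v/2) := by
      refine le_of_tendsto lim0F ?_
      filter_upwards [Ioo_mem_nhdsLT_of_mem (show (0:ℝ) ∈ Set.Ioc (v/2) 0 from ⟨by linarith [hv.2], le_rfl⟩)] with u hu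
      exact (antiF hwmem ⟨by linarith [hv.1, hv.2, hu.1], hu.2⟩ hu.1).le
    exact hge.trans_lt hlt
  refine ⟨antiF, lim0F, limPiF, ⟨hpos, antiF.injOn, ?_⟩⟩
  intro t ht
  have h1 : ∃ a, a ∈ Set.Ioo (-π) 0 ∧ t < F a := by
    have ev := ((limPiF.eventually_gt_atTop t).and
      (eventually_of_mem (Ioo_mem_nhdsGT_of_mem (show (-π:ℝ) ∈ Set.Ico (-π) 0 from ⟨le_rfl, by linarith [Real.pi_pos]⟩)) (fun x hx => hx))).exists
    obtain ⟨a, ha1, ha2⟩ := ev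
    exact ⟨a, ha2, ha1⟩
  obtain ⟨a, ha, hta⟩ := h1
  have h2 : ∃ b, b ∈ Set.Ioo a 0 ∧ F b < t := by
    have ev1 : ∀ᶠ v in nhdsWithin (0:ℝ) (Set.Iio 0), F v < t :=
      lim0F.eventually (eventually_lt_nhds ht)
    have ev := (ev1.and (eventually_of_mem (Ioo_mem_nhdsLT_of_mem (show (0:ℝ) ∈ Set.Ioc a 0 from ⟨ha.2, le_rfl⟩)) (fun x hx => hx))).exists
    obtain ⟨b, hb1, hb2⟩ := ev
    exact ⟨b, hb2, hb1⟩
  obtain ⟨b, hb, hbt⟩ := h2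
  have hbmem : b ∈ Set.Ioo (-π) 0 := ⟨lt_trans ha.1 hb.1, hb.2⟩
  have hcont : ContinuousOn F (Set.Icc a b) := by
    intro x hx
    have hxm : x ∈ Set.Ioo (-π) 0 := ⟨lt_of_lt_of_le ha.1 hx.1, lt_of_le_of_lt hx.2 hbmem.2⟩
    exact (hasDerivAtF hxm.1 hxm.2).continuousAt.continuousWithinAt
  obtain ⟨c, hc, hfc⟩ := intermediate_value_Ioo' hb.1.le hcont ⟨hbt, hta⟩
  exact ⟨c, ⟨lt_trans ha.1 hc.1, lt_trans hc.2 hbmem.2⟩, hfc⟩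
end

section
/- Let w : ℝ → ℂ and t ∈ ℝ be such that w is differentiable at t, w(s)·exp(w(s)) = −exp(−1 + s) for all s in a neighbourhood of t, and w(t) ∉ {0, −1}. Then the function s ↦ s − (1 + w(s))² / w(s) has derivative 1 / w(t) at t. (This is the antiderivative identity ∫_0^t dx / W_{−1}(−e^{−1+x}) = t − (1 + W_{−1}(−e^{−1+t}))² / W_{−1}(−e^{−1+t}) used to compute the distribution function of the final jump time G_∞.) -/
/-- If `w : ℝ → ℂ` is differentiable at `t`, satisfies the Lambert-function equation
`w(s)·e^{w(s)} = −e^{−1+s}` near `t`, and `w(t) ∉ {0, −1}`, then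
`s ↦ s − (1 + w(s))²/w(s)` has derivative `1/w(t)` at `t`.  This is the antiderivative
identity `∫_0^t dx/W₋₁(−e^{−1+x}) = t − (1 + W₋₁(−e^{−1+t}))²/W₋₁(−e^{−1+t})` used to
compute the distribution function of the final jump time `G_∞`. -/
theorem hasDerivAt_antiderivative_Ginfty (w : ℝ → ℂ) (t : ℝ)
    (hw : DifferentiableAt ℝ w t)
    (heq : ∀ᶠ s in nhds t, w s * Complex.exp (w s) = -Complex.exp (-1 + (s : ℂ)))
    (h0 : w t ≠ 0) (h1 : w t ≠ -1) :
    HasDerivAt (fun s : ℝ => (s : ℂ) - (1 + w s) ^ 2 / w s) (1 / w t) t := by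
  have hd : HasDerivAt w (deriv w t) t := hw.hasDerivAt
  set d : ℂ := deriv w t with hdd
  have hwt : w t * Complex.exp (w t) = -Complex.exp (-1 + (t : ℂ)) := heq.self_of_nhds
  have hg : HasDerivAt (fun s : ℝ => w s * Complex.exp (w s))
      (d * Complex.exp (w t) + w t * (Complex.exp (w t) * d)) t := hd.mul hd.cexp
  have hg2 : HasDerivAt (fun s : ℝ => -Complex.exp (-1 + (s : ℂ)))
      (-Complex.exp (-1 + (t : ℂ))) t := by
    have hc : HasDerivAt (fun z : ℂ => -Complex.exp (-1 + z))
        (-Complex.exp (-1 + (t : ℂ))) (t : ℂ) := by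
      simpa [Pi.neg_def] using (((hasDerivAt_id ((t : ℂ))).const_add (-1)).cexp).neg
    exact hc.comp_ofReal
  have hg' : HasDerivAt (fun s : ℝ => w s * Complex.exp (w s))
      (-Complex.exp (-1 + (t : ℂ))) t := hg2.congr_of_eventuallyEq heq
  have hde : d * Complex.exp (w t) + w t * (Complex.exp (w t) * d)
      = -Complex.exp (-1 + (t : ℂ)) := hg.unique hg'
  rw [← hwt] at hde
  have hexp : Complex.exp (w t) ≠ 0 := Complex.exp_ne_zero _
  have hkey : d * (1 + w t) = w t := by
    have h2 : (d * (1 + w t)) * Complex.exp (w t) = w t * Complex.exp (w t) := by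
      linear_combination hde
    exact mul_right_cancel₀ hexp h2
  have hid : HasDerivAt (fun s : ℝ => (s : ℂ)) 1 t := by
    simpa using (hasDerivAt_id ((t : ℂ))).comp_ofReal
  have haux : HasDerivAt (fun s : ℝ => 1 + w s) d t := hd.const_add 1
  have hnum : HasDerivAt (fun s : ℝ => (1 + w s) ^ 2)
      (d * (1 + w t) + (1 + w t) * d) t := by
    simpa [sq, Pi.mul_def] using haux.mul haux
  have hdiv : HasDerivAt (fun s : ℝ => (1 + w s) ^ 2 / w s)
      (((d * (1 + w t) + (1 + w t) * d) * w t - (1 + w t) ^ 2 * d) / w t ^ 2) t :=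
    hnum.div hd h0
  have hfinal := hid.sub hdiv
  convert hfinal using 1
  all_goals try rfl
  field_simp
  linear_combination (w t - 1) * hkey
end

section
/- Let a, b : (0, ∞) → ℝ satisfy 0 < a(t) < 1 < b(t) and a(t)·e^{−a(t)} = e^{−1−t} = b(t)·e^{−b(t)} for all t > 0. Then the function c(t) := b(t)/(b(t) − 1) + a(t)/(1 − a(t)) tends to 1 as t → ∞. -/
open Filter

/-- If `a, b : (0, ∞) → ℝ` satisfy `0 < a(t) < 1 < b(t)` and
`a(t)·e^{−a(t)} = e^{−1−t} = b(t)·e^{−b(t)}` for all `t > 0`, then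
`c(t) := b(t)/(b(t) − 1) + a(t)/(1 − a(t)) → 1` as `t → ∞`. -/
theorem tendsto_c_one (a b : ℝ → ℝ)
    (ha : ∀ t : ℝ, 0 < t → 0 < a t ∧ a t < 1)
    (hb : ∀ t : ℝ, 0 < t → 1 < b t)
    (heqa : ∀ t : ℝ, 0 < t → a t * Real.exp (-a t) = Real.exp (-1 - t))
    (heqb : ∀ t : ℝ, 0 < t → b t * Real.exp (-b t) = Real.exp (-1 - t)) :
    Tendsto (fun t : ℝ => b t / (b t - 1) + a t / (1 - a t)) atTop (nhds 1) := by
  -- b t ≥ 1 + t for t > 0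
  have hbge : ∀ t : ℝ, 0 < t → 1 + t ≤ b t := by
    intro t ht
    have h1 := hb t ht
    have heq := heqb t ht
    have hlt : Real.exp (-b t) < Real.exp (-1 - t) := by
      calc Real.exp (-b t) = 1 * Real.exp (-b t) := (one_mul _).symm
        _ < b t * Real.exp (-b t) := by
            exact mul_lt_mul_of_pos_right h1 (Real.exp_pos _)
        _ = Real.exp (-1 - t) := heq
    have := (Real.exp_lt_exp).mp hlt
    linarith
  -- a t ≤ exp (-t) for t > 0
  have hale : ∀ t : ℝ, 0 < t → a t ≤ Real.exp (-t) := by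
    intro t ht
    obtain ⟨h0, h1⟩ := ha t ht
    have heq := heqa t ht
    have : a t = Real.exp (-1 - t) * Real.exp (a t) := by
      have he : Real.exp (-a t) * Real.exp (a t) = 1 := by
        rw [← Real.exp_add]; simp
      calc a t = a t * (Real.exp (-a t) * Real.exp (a t)) := by rw [he]; ring
        _ = (a t * Real.exp (-a t)) * Real.exp (a t) := by ring
        _ = Real.exp (-1 - t) * Real.exp (a t) := by rw [heq]
    rw [this]
    calc Real.exp (-1 - t) * Real.exp (a t)
        ≤ Real.exp (-1 - t) * Real.exp 1 := by
          exact mul_le_mul_of_nonneg_left (Real.exp_le_exp.mpr h1.le) (Real.exp_pos _).le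
      _ = Real.exp (-t) := by rw [← Real.exp_add]; ring_nf
  -- b tends to atTop
  have hbtop : Tendsto b atTop atTop := by
    apply tendsto_atTop_mono' _ _ (tendsto_atTop_add_const_left _ 1 tendsto_id)
    filter_upwards [eventually_gt_atTop 0] with t ht
    exact hbge t ht
  -- a tends to 0
  have hazero : Tendsto a atTop (nhds 0) := by
    have h1 : Tendsto (fun t : ℝ => Real.exp (-t)) atTop (nhds 0) := by
      simpa using Real.tendsto_exp_neg_atTop_nhds_zero
    apply squeeze_zero' _ _ h1
    · filter_upwards [eventually_gt_atTop 0] with t ht using (ha t ht).1.le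
    · filter_upwards [eventually_gt_atTop 0] with t ht using hale t ht
  -- b/(b-1) → 1
  have hb1 : Tendsto (fun t => b t / (b t - 1)) atTop (nhds 1) := by
    have hsub : Tendsto (fun t => b t - 1) atTop atTop :=
      tendsto_atTop_add_const_right _ (-1) hbtop
    have hinv : Tendsto (fun t => (b t - 1)⁻¹) atTop (nhds 0) :=
      tendsto_inv_atTop_zero.comp hsub
    have : Tendsto (fun t => 1 + (b t - 1)⁻¹) atTop (nhds (1 + 0)) :=
      tendsto_const_nhds.add hinv
    rw [add_zero] at this
    apply this.congr'
    filter_upwards [eventually_gt_atTop 0] with t ht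
    have h1 := hb t ht
    have hne : b t - 1 ≠ 0 := by linarith
    field_simp
    ring
  -- a/(1-a) → 0
  have ha0 : Tendsto (fun t => a t / (1 - a t)) atTop (nhds 0) := by
    have hden : Tendsto (fun t => 1 - a t) atTop (nhds 1) := by
      have := (tendsto_const_nhds (x := (1:ℝ)) (f := atTop (α := ℝ))).sub hazero
      simpa using this
    have := hazero.div hden one_ne_zero
    simpa [Pi.div_def] using this
  have := hb1.add ha0
  simpa using this
end

section
/- Let m : ℕ → ℝ → ℝ be a family of continuous functions such that m_0(t) = 1 for all t ≥ 0 and, for every n ≥ 1 and t ≥ 0, m_n(t) − m_{n−1}(t) = n·∫_0^t m_{n−1}(s) ds. Then for all n ≥ 0 and t ≥ 0, m_n(t) = ∑_{k=0}^{n} e_k(1, 2, …, n) · t^k / k!, where e_k(1, …, n) = ∑_{1 ≤ j_1 < ⋯ < j_k ≤ n} j_1 ⋯ j_k is the k-th elementary symmetric polynomial of 1, 2, …, n (with e_0 = 1). -/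
open Finset

noncomputable def c (n k : ℕ) : ℝ := ∑ A ∈ powersetCard k (Icc 1 n), ∏ j ∈ A, (j : ℝ)

lemma c_zero (n : ℕ) : c n 0 = 1 := by simp [c]

lemma c_top (n : ℕ) : c n (n + 1) = 0 := by
  have : (Icc 1 n).card = n := by simp
  rw [c, powersetCard_eq_empty.2 (by omega), sum_empty]

lemma c_succ (n k : ℕ) : c (n + 1) (k + 1) = c n (k + 1) + (n + 1) * c n k := by
  have hni : (n + 1) ∉ Icc 1 n := by simp
  have hIcc : Icc 1 (n + 1) = insert (n + 1) (Icc 1 n) := by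
    exact (Finset.insert_Icc_right_eq_Icc_add_one (by omega)).symm
  rw [c, hIcc, powersetCard_succ_insert hni, sum_union, sum_image]
  · congr 1
    rw [c, Finset.mul_sum]
    refine sum_congr rfl fun A hA => ?_
    rw [prod_insert (fun h => hni ((mem_powersetCard.1 hA).1 h))]
    push_cast; ring
  · intro A hA B hB h
    have hA' : (n+1) ∉ A := fun h => hni ((mem_powersetCard.1 hA).1 h)
    have hB' : (n+1) ∉ B := fun h => hni ((mem_powersetCard.1 hB).1 h)
    have := congrArg (fun S => Finset.erase S (n+1)) h
    simpa [Finset.erase_insert hA', Finset.erase_insert hB'] using this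
  · rw [Finset.disjoint_left]
    intro A hA hA'
    obtain ⟨B, hB, rfl⟩ := mem_image.1 hA'
    exact hni ((mem_powersetCard.1 hA).1 (mem_insert_self _ _))

lemma key_poly (n : ℕ) (t : ℝ) :
    ∑ k ∈ Finset.range (n + 2), c (n+1) k * t ^ k / (Nat.factorial k)
      = (∑ k ∈ Finset.range (n+1), c n k * t ^ k / (Nat.factorial k))
        + (n+1) * ∑ k ∈ Finset.range (n+1),
            c n k * t ^ (k+1) / ((k+1) * Nat.factorial k) := by
  rw [Finset.sum_range_succ' (fun k => c (n+1) k * t ^ k / (Nat.factorial k)) (n+1),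
      Finset.sum_range_succ' (fun k => c n k * t ^ k / (Nat.factorial k)) n]
  simp only [c_succ, c_zero, add_mul, add_div, Finset.sum_add_distrib, Finset.mul_sum]
  rw [Finset.sum_range_succ (fun i => c n (i+1) * t ^ (i+1) / (Nat.factorial (i+1))) n]
  simp only [c_top, zero_mul, zero_div, add_zero, Nat.factorial_succ]
  have e : ∀ (x : ℕ) (a : ℝ), a * c n x * t ^ (x+1) / (((x+1) * Nat.factorial x : ℕ) : ℝ)
      = a * (c n x * t ^ (x+1) / ((x:ℝ) * (Nat.factorial x) + 1 * (Nat.factorial x))) := by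
    intro x a
    have h : ((x:ℝ) * (Nat.factorial x) + 1 * (Nat.factorial x)) = (((x+1) * Nat.factorial x : ℕ) : ℝ) := by
      push_cast; ring
    rw [h]; ring
  simp_rw [e]
  ring



/-- If `m : ℕ → ℝ → ℝ` is a family of continuous functions with `m_0 ≡ 1` on `[0, ∞)` and
`m_n(t) − m_{n−1}(t) = n·∫_0^t m_{n−1}(s) ds` for `n ≥ 1`, `t ≥ 0`, then
`m_n(t) = ∑_{k=0}^n e_k(1, …, n)·t^k/k!`, where `e_k(1, …, n)` is the `k`-th elementary
symmetric polynomial of `1, 2, …, n`.  (These are the moments `m_n(t) = E[(Z_t + t)^n]` of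
the monotone Poisson process started at `1`.) -/
theorem moments_monotone_poisson (m : ℕ → ℝ → ℝ)
    (hcont : ∀ n, Continuous (m n))
    (h0 : ∀ t : ℝ, 0 ≤ t → m 0 t = 1)
    (hrec : ∀ n : ℕ, 1 ≤ n → ∀ t : ℝ, 0 ≤ t →
      m n t - m (n - 1) t = n * ∫ s in (0:ℝ)..t, m (n - 1) s) :
    ∀ n : ℕ, ∀ t : ℝ, 0 ≤ t →
      m n t = ∑ k ∈ Finset.range (n + 1),
        (∑ A ∈ Finset.powersetCard k (Finset.Icc 1 n), ∏ j ∈ A, (j : ℝ)) *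
          t ^ k / (Nat.factorial k) := by
  have main : ∀ n : ℕ, ∀ t : ℝ, 0 ≤ t →
      m n t = ∑ k ∈ Finset.range (n + 1), c n k * t ^ k / (Nat.factorial k) := by
    intro n
    induction n with
    | zero => intro t ht; simpa [c] using h0 t ht
    | succ n ih =>
      intro t ht
      have hm := hrec (n+1) (by omega) t ht
      simp only [Nat.add_sub_cancel] at hm
      have hint : (∫ s in (0:ℝ)..t, m n s)
          = ∑ k ∈ Finset.range (n+1), c n k * t ^ (k+1) / ((k+1) * Nat.factorial k) := by
        rw [intervalIntegral.integral_congr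
          (g := fun s => ∑ k ∈ Finset.range (n+1), c n k * s ^ k / (Nat.factorial k)) ?_]
        · rw [intervalIntegral.integral_finset_sum]
          · refine Finset.sum_congr rfl fun k _ => ?_
            have hs : ∀ s : ℝ, c n k * s ^ k / (Nat.factorial k)
                = (c n k / (Nat.factorial k)) * s ^ k := fun s => by ring
            simp_rw [hs]
            rw [intervalIntegral.integral_const_mul, integral_pow]
            rw [zero_pow (Nat.succ_ne_zero k), sub_zero, div_mul_div_comm,
              mul_comm ((Nat.factorial k : ℝ)) ((k : ℝ) + 1)]
          · intro k _
            apply Continuous.intervalIntegrable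
            continuity
        · intro s hs
          rw [Set.uIcc_of_le ht] at hs
          exact ih s hs.1
      have : m (n+1) t = m n t + (n+1) * ∫ s in (0:ℝ)..t, m n s := by
        push_cast at hm ⊢; linarith
      rw [this, ih t ht, hint, key_poly n t]
  exact main
end

section
/- The function φ(v) := −v / ((1 − v·(cos v/sin v))² + v²) is strictly increasing on the interval (−π, 0). (Since φ(v) = π·f_J(x(v)) where x(v) = 1 − v·cot v + log(v/sin v) is strictly decreasing on (−π, 0), this is the parametrized form of the statement that the density f_J of the random variable J is strictly decreasing on (0, ∞).) -/
lemma sin_lower {x : ℝ} (hx : 0 ≤ x) : x - x^3/6 ≤ Real.sin x := by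
  have key : MonotoneOn (fun x : ℝ => Real.sin x - x + x^3/6) (Set.Ici 0) := by
    apply monotoneOn_of_deriv_nonneg (convex_Ici 0)
    · fun_prop
    · intro y hy
      exact (((Real.hasDerivAt_sin y).sub (hasDerivAt_id' y)).add
        ((hasDerivAt_pow 3 y).div_const 6)).differentiableAt.differentiableWithinAt
    · intro y hy
      have hd := (((Real.hasDerivAt_sin y).sub (hasDerivAt_id' y)).add
        ((hasDerivAt_pow 3 y).div_const 6)).deriv
      erw [hd]
      have := Real.one_sub_sq_div_two_le_cos (x := y)
      push_cast
      nlinarith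
  have h0 := key (Set.self_mem_Ici) hx hx
  simp only [Real.sin_zero] at h0
  nlinarith [h0]

lemma cos_upper {x : ℝ} (hx : 0 ≤ x) : Real.cos x ≤ 1 - x^2/2 + x^4/24 := by
  have key : MonotoneOn (fun x : ℝ => 1 - x^2/2 + x^4/24 - Real.cos x) (Set.Ici 0) := by
    apply monotoneOn_of_deriv_nonneg (convex_Ici 0)
    · fun_prop
    · intro y hy
      exact ((((hasDerivAt_const y (1:ℝ)).sub ((hasDerivAt_pow 2 y).div_const 2)).add
        ((hasDerivAt_pow 4 y).div_const 24)).sub (Real.hasDerivAt_cos y)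
        ).differentiableAt.differentiableWithinAt
    · intro y hy
      rw [interior_Ici] at hy
      have hd := ((((hasDerivAt_const y (1:ℝ)).sub ((hasDerivAt_pow 2 y).div_const 2)).add
        ((hasDerivAt_pow 4 y).div_const 24)).sub (Real.hasDerivAt_cos y)).deriv
      erw [hd]
      have := sin_lower (le_of_lt hy)
      push_cast
      nlinarith
  have h0 := key (Set.self_mem_Ici) hx hx
  simp only [Real.cos_zero] at h0
  nlinarith [h0]

lemma F_hasDerivAt (u : ℝ) :
    HasDerivAt (fun u : ℝ => 3*u^2*Real.sin u - 2*u^3*Real.cos u - (Real.sin u)^3)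
      (6*u*Real.sin u - 3*u^2*Real.cos u + 2*u^3*Real.sin u - 3*(Real.sin u)^2*Real.cos u) u := by
  have hs := Real.hasDerivAt_sin u
  have hc := Real.hasDerivAt_cos u
  have h2 : HasDerivAt (fun x:ℝ => x^2) (2*u) u := by simpa using hasDerivAt_pow 2 u
  have h3 : HasDerivAt (fun x:ℝ => x^3) (3*u^2) u := by simpa using hasDerivAt_pow 3 u
  have t1 := (h2.const_mul (3:ℝ)).mul hs
  have t2 := (h3.const_mul (2:ℝ)).mul hc
  have t3 := hs.pow 3
  have := (t1.sub t2).sub t3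
  convert this using 1 <;> try rfl
  push_cast
  ring

lemma F_pos {u : ℝ} (hu : u ∈ Set.Ioo 0 Real.pi) :
    0 < 3*u^2*Real.sin u - 2*u^3*Real.cos u - (Real.sin u)^3 := by
  have key : StrictMonoOn (fun u : ℝ => 3*u^2*Real.sin u - 2*u^3*Real.cos u - (Real.sin u)^3)
      (Set.Icc 0 Real.pi) := by
    apply strictMonoOn_of_deriv_pos (convex_Icc 0 Real.pi)
    · fun_prop
    · intro y hy
      rw [interior_Icc] at hy
      rw [(F_hasDerivAt y).deriv]
      obtain ⟨hy0, hyp⟩ := hy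
      have hsy : 0 < Real.sin y := Real.sin_pos_of_pos_of_lt_pi hy0 hyp
      rcases le_or_gt (Real.cos y) 0 with hcy | hcy
      · nlinarith [mul_pos hy0 hsy, mul_pos (mul_pos hy0 (mul_pos hy0 hy0)) hsy,
          mul_nonneg (sq_nonneg y) (neg_nonneg.2 hcy),
          mul_nonneg (sq_nonneg (Real.sin y)) (neg_nonneg.2 hcy)]
      · have hy2 : y < 2 := by
          by_contra h
          push_neg at h
          have : Real.cos y ≤ 0 := Real.cos_nonpos_of_pi_div_two_le_of_le
            (by linarith [Real.pi_lt_d2]) (by linarith [Real.pi_gt_three])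
          linarith
        have hsl := sin_lower hy0.le
        have hcu := cos_upper hy0.le
        have hsu : Real.sin y < y := Real.sin_lt hy0
        have h1 : 0 ≤ (6*y + 2*y^3) * (Real.sin y - (y - y^3/6)) :=
          mul_nonneg (by positivity) (by linarith)
        have h2 : 0 ≤ (y^2 - (Real.sin y)^2) * Real.cos y :=
          mul_nonneg (by nlinarith) hcy.le
        have h3 : 0 ≤ y^2 * ((1 - y^2/2 + y^4/24) - Real.cos y) :=
          mul_nonneg (sq_nonneg y) (by linarith)
        have h4 : 0 < y^4 * (4 - 7*y^2/12) := by
          have hy4 : (0:ℝ) < y^4 := by positivity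
          have : 7*y^2/12 < 4 := by nlinarith
          exact mul_pos hy4 (by linarith)
        nlinarith [h1, h2, h3, h4]
  have h0 : (fun u : ℝ => 3*u^2*Real.sin u - 2*u^3*Real.cos u - (Real.sin u)^3) 0 = 0 := by simp
  have := key (Set.left_mem_Icc.2 Real.pi_pos.le) ⟨hu.1.le, hu.2.le⟩ hu.1
  rw [h0] at this
  exact this

/-- The function `φ(v) = −v/((1 − v·cot v)² + v²)` is strictly increasing on `(−π, 0)`.
Since `φ(v) = π·f_J(x(v))` where `x(v) = 1 − v·cot v + log(v/sin v)` is strictly decreasing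
on `(−π, 0)`, this is the parametrized form of the statement that the density `f_J` of the
random variable `J` is strictly decreasing on `(0, ∞)`. -/
theorem phi_strictMono :
    StrictMonoOn
      (fun v : ℝ => -v / ((1 - v * (Real.cos v / Real.sin v)) ^ 2 + v ^ 2))
      (Set.Ioo (-Real.pi) 0) := by
  have hsin : ∀ v ∈ Set.Ioo (-Real.pi) 0, Real.sin v < 0 := fun v hv =>
    Real.sin_neg_of_neg_of_neg_pi_lt hv.2 hv.1
  have hden : ∀ v ∈ Set.Ioo (-Real.pi) 0,
      0 < (1 - v * (Real.cos v / Real.sin v)) ^ 2 + v ^ 2 := by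
    intro v hv
    have hv0 : v ≠ 0 := ne_of_lt hv.2
    positivity
  apply strictMonoOn_of_deriv_pos (convex_Ioo _ _)
  · apply ContinuousOn.div
    · fun_prop
    · apply ContinuousOn.add
      · apply ContinuousOn.pow
        apply ContinuousOn.sub continuousOn_const
        apply ContinuousOn.mul continuousOn_id
        exact ContinuousOn.div Real.continuousOn_cos Real.continuousOn_sin
          (fun v hv => ne_of_lt (hsin v hv))
      · fun_prop
    · exact fun v hv => ne_of_gt (hden v hv)
  · intro v hv
    rw [interior_Ioo] at hv
    have hs : Real.sin v < 0 := hsin v hv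
    have hsne : Real.sin v ≠ 0 := ne_of_lt hs
    have hD : 0 < (1 - v * (Real.cos v / Real.sin v)) ^ 2 + v ^ 2 := hden v hv
    set s := Real.sin v with hsdef
    set c := Real.cos v with hcdef
    -- derivative construction
    have h1 : HasDerivAt (fun v => Real.cos v / Real.sin v)
        ((-Real.sin v * Real.sin v - Real.cos v * Real.cos v) / (Real.sin v)^2) v :=
      (Real.hasDerivAt_cos v).div (Real.hasDerivAt_sin v) hsne
    have h2 := (hasDerivAt_id' v).mul h1
    have h3 := (hasDerivAt_const v (1:ℝ)).sub h2
    have h4 := h3.pow 2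
    have h5 := h4.add (hasDerivAt_pow 2 v)
    have h6 := (hasDerivAt_id' v).neg
    have h7 := h6.div h5 (ne_of_gt hD)
    erw [h7.deriv]
    apply div_pos
    · -- numerator positive
      have hP : 3*v^2*s - 2*v^3*c - s^3 < 0 := by
        have hu : -v ∈ Set.Ioo 0 Real.pi := ⟨by linarith [hv.2], by linarith [hv.1]⟩
        have := F_pos hu
        rw [Real.sin_neg, Real.cos_neg] at this
        rw [hsdef, hcdef]
        nlinarith [this]
      have hs3 : s^3 < 0 := Odd.pow_neg (by decide) hs
      have hpyth : c^2 + s^2 = 1 := by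
        rw [hsdef, hcdef]; exact Real.cos_sq_add_sin_sq v
      have hpos : (0:ℝ) < (3*v^2*s - 2*v^3*c - s^3)/s^3 := div_pos_of_neg_of_neg hP hs3
      convert hpos using 1 <;> try rfl
      push_cast
      simp only [Pi.add_apply, Pi.sub_apply, Pi.mul_apply, Pi.pow_apply, Pi.neg_apply, ← hsdef, ← hcdef]
      field_simp
      linear_combination (3*v^2*s - 2*v^3*c) * hpyth
    · positivity
end
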